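/- Let N ≥ 3, λ > 0, let F : ℝ → ℝ be Borel measurable with G(s) := F(s) − (λ/2)s², and let w, v : EuclideanSpace ℝ (Fin N) → ℝ be differentiable with ∫_{ℝ^N} ‖∇w‖² dx < ∞ and 0 < ∫_{ℝ^N} ‖∇v‖² dx < ∞. Let t : ℝ → ℝ satisfy t(α) ≥ t̄ for all α, for some constant t̄ > 0, and suppose that for every α ∈ ℝ the function γ(α) := (w + α v)(·/t(α)) has ‖∇γ(α)‖², γ(α)² and F∘γ(α) integrable and satisfies the Pohozaev constraint (N−2) ∫_{ℝ^N} ‖∇γ(α)‖² dx = 2N ∫_{ℝ^N} G(γ(α)) dx. Then I(γ(α)) → +∞ as α → +∞ and as α → −∞. -/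

import Mathlib

set_option maxHeartbeats 1000000


open MeasureTheory Filter

/-- Pointwise lower bound `‖a + α•b‖² ≥ α²‖b‖² − 2|α|‖b‖‖a‖`. -/
lemma aux_norm_sq_lower {X : Type*} [NormedAddCommGroup X] [NormedSpace ℝ X]
    (a b : X) (α : ℝ) :
    α ^ 2 * ‖b‖ ^ 2 - 2 * |α| * (‖b‖ * ‖a‖) ≤ ‖a + α • b‖ ^ 2 := by
  have h : |α| * ‖b‖ ≤ ‖a + α • b‖ + ‖a‖ := by
    calc |α| * ‖b‖ = ‖α • b‖ := by rw [norm_smul, Real.norm_eq_abs]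
      _ = ‖(a + α • b) - a‖ := by congr 1; abel
      _ ≤ ‖a + α • b‖ + ‖a‖ := norm_sub_le _ _
  rcases le_total (|α| * ‖b‖) (2 * ‖a‖) with hc | hc
  · nlinarith [sq_abs α, sq_nonneg (‖a + α • b‖),
      mul_nonneg (mul_nonneg (abs_nonneg α) (norm_nonneg b))
        (by linarith : (0:ℝ) ≤ 2 * ‖a‖ - |α| * ‖b‖)]
  · nlinarith [sq_abs α, norm_nonneg b, norm_nonneg (a + α • b), abs_nonneg α, norm_nonneg a]

/-- Derivative of a dilated function. -/
lemma aux_fderiv_comp_smul {N : ℕ} (u : EuclideanSpace ℝ (Fin N) → ℝ)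
    (hu : Differentiable ℝ u) (c : ℝ) (x : EuclideanSpace ℝ (Fin N)) :
    HasFDerivAt (fun x => u (c • x)) (c • fderiv ℝ u (c • x)) x := by
  have h1 : HasFDerivAt (fun x : EuclideanSpace ℝ (Fin N) => c • x)
      (c • ContinuousLinearMap.id ℝ (EuclideanSpace ℝ (Fin N))) x :=
    (hasFDerivAt_id x).const_smul c
  have h2 := (hu (c • x)).hasFDerivAt.comp x h1
  have heq : (fderiv ℝ u (c • x)).comp (c • ContinuousLinearMap.id ℝ (EuclideanSpace ℝ (Fin N)))
      = c • fderiv ℝ u (c • x) := by ext y; simp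
  rw [heq] at h2
  exact h2

/-- Coercivity of the energy along a projected line on the Pohozaev manifold: if
`t(α) ≥ t̄ > 0` and `γ(α) = (w + αv)(·/t(α))` lies on the Pohozaev manifold for all `α`,
then `I(γ(α)) → +∞` as `α → ±∞`. -/
theorem energy_coercive_on_pohozaev_path {N : ℕ} (hN : 3 ≤ N)
    (lam : ℝ) (hlam : 0 < lam)
    (F G : ℝ → ℝ) (hFmeas : Measurable F)
    (hG : ∀ s : ℝ, G s = F s - lam / 2 * s ^ 2)
    (w v : EuclideanSpace ℝ (Fin N) → ℝ)
    (hw : Differentiable ℝ w) (hv : Differentiable ℝ v)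
    (hwgrad : Integrable (fun x => ‖fderiv ℝ w x‖ ^ 2))
    (hvgrad : Integrable (fun x => ‖fderiv ℝ v x‖ ^ 2))
    (hvpos : 0 < ∫ x, ‖fderiv ℝ v x‖ ^ 2)
    (t : ℝ → ℝ) (tbar : ℝ) (htbar : 0 < tbar) (ht : ∀ α : ℝ, tbar ≤ t α)
    (γ : ℝ → EuclideanSpace ℝ (Fin N) → ℝ)
    (hγ : ∀ α : ℝ, γ α = fun x => w ((t α)⁻¹ • x) + α * v ((t α)⁻¹ • x))
    (hγgrad : ∀ α : ℝ, Integrable (fun x => ‖fderiv ℝ (γ α) x‖ ^ 2))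
    (hγsq : ∀ α : ℝ, Integrable (fun x => (γ α x) ^ 2))
    (hγF : ∀ α : ℝ, Integrable (fun x => F (γ α x)))
    (hcon : ∀ α : ℝ, ((N : ℝ) - 2) * ∫ x, ‖fderiv ℝ (γ α) x‖ ^ 2 =
      2 * (N : ℝ) * ∫ x, G (γ α x)) :
    Tendsto (fun α : ℝ =>
        ((1 : ℝ) / 2) * (∫ x, (‖fderiv ℝ (γ α) x‖ ^ 2 + lam * (γ α x) ^ 2)) -
          ∫ x, F (γ α x)) atTop atTop ∧
    Tendsto (fun α : ℝ =>
        ((1 : ℝ) / 2) * (∫ x, (‖fderiv ℝ (γ α) x‖ ^ 2 + lam * (γ α x) ^ 2)) -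
          ∫ x, F (γ α x)) atBot atTop := by
  have hN0 : (0:ℝ) < (N:ℝ) := by exact_mod_cast (by omega : 0 < N)
  have hNne : (N:ℝ) ≠ 0 := ne_of_gt hN0
  set C := ∫ x, ‖fderiv ℝ v x‖ ^ 2 with hCdef
  set D := ∫ x, ‖fderiv ℝ v x‖ * ‖fderiv ℝ w x‖ with hDdef
  set g : ℝ → EuclideanSpace ℝ (Fin N) → (EuclideanSpace ℝ (Fin N) →L[ℝ] ℝ) :=
    fun α y => fderiv ℝ w y + α • fderiv ℝ v y with hgdef
  set Q : ℝ → ℝ := fun α => ∫ y, ‖g α y‖ ^ 2 with hQdef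
  have hmeas : ∀ α : ℝ, Measurable fun y => ‖g α y‖ ^ 2 := fun α =>
    (((measurable_fderiv ℝ w).add ((measurable_fderiv ℝ v).const_smul α)).norm).pow_const 2
  have hprod : Integrable (fun y => ‖fderiv ℝ v y‖ * ‖fderiv ℝ w y‖) := by
    apply Integrable.mono' ((hvgrad.add hwgrad).const_mul (1/2))
    · exact ((measurable_fderiv ℝ v).norm.mul (measurable_fderiv ℝ w).norm).aestronglyMeasurable
    · filter_upwards with y
      simp only [Pi.add_apply]
      rw [Real.norm_eq_abs, abs_of_nonneg (by positivity)]
      nlinarith [sq_nonneg (‖fderiv ℝ v y‖ - ‖fderiv ℝ w y‖)]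
  have hQint : ∀ α : ℝ, Integrable (fun y => ‖g α y‖ ^ 2) := by
    intro α
    apply Integrable.mono' ((hwgrad.const_mul 2).add (hvgrad.const_mul (2 * α ^ 2)))
    · exact (hmeas α).aestronglyMeasurable
    · filter_upwards with y
      simp only [Pi.add_apply]
      rw [Real.norm_eq_abs, abs_of_nonneg (by positivity)]
      have h1 : ‖g α y‖ ≤ ‖fderiv ℝ w y‖ + |α| * ‖fderiv ℝ v y‖ := by
        simpa [hgdef, norm_smul] using norm_add_le (fderiv ℝ w y) (α • fderiv ℝ v y)
      nlinarith [norm_nonneg (g α y), norm_nonneg (fderiv ℝ w y), norm_nonneg (fderiv ℝ v y),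
        sq_abs α, abs_nonneg α, sq_nonneg (‖fderiv ℝ w y‖ - |α| * ‖fderiv ℝ v y‖),
        mul_nonneg (abs_nonneg α) (norm_nonneg (fderiv ℝ v y))]
  have hQlb : ∀ α : ℝ, α ^ 2 * C - 2 * |α| * D ≤ Q α := by
    intro α
    have hmono : ∫ y, (α ^ 2 * ‖fderiv ℝ v y‖ ^ 2
        - 2 * |α| * (‖fderiv ℝ v y‖ * ‖fderiv ℝ w y‖)) ≤ Q α := by
      apply integral_mono ((hvgrad.const_mul _).sub (hprod.const_mul _)) (hQint α)
      intro y
      exact aux_norm_sq_lower _ _ α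
    rw [integral_sub (hvgrad.const_mul _) (hprod.const_mul _), integral_const_mul,
      integral_const_mul] at hmono
    exact hmono
  have hfd : ∀ (α : ℝ) x, fderiv ℝ (γ α) x = (t α)⁻¹ • g α ((t α)⁻¹ • x) := by
    intro α x
    have h1 := aux_fderiv_comp_smul w hw (t α)⁻¹ x
    have h2 := (aux_fderiv_comp_smul v hv (t α)⁻¹ x).const_mul α
    have h3 : HasFDerivAt (γ α) ((t α)⁻¹ • g α ((t α)⁻¹ • x)) x := by
      rw [hγ α]
      refine (h1.add h2).congr_fderiv ?_
      simp only [hgdef, smul_add]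
      rw [smul_comm]
    exact h3.fderiv
  have hEeq : ∀ α : ℝ, (∫ x, ‖fderiv ℝ (γ α) x‖ ^ 2) = (t α) ^ (N - 2) * Q α := by
    intro α
    have htpos : 0 < t α := lt_of_lt_of_le htbar (ht α)
    have h1 : ∀ x, ‖fderiv ℝ (γ α) x‖ ^ 2
        = ((t α)⁻¹) ^ 2 * (fun y => ‖g α y‖ ^ 2) ((t α)⁻¹ • x) := by
      intro x
      rw [hfd α x, norm_smul, Real.norm_eq_abs, abs_of_nonneg (by positivity), mul_pow]
    calc (∫ x, ‖fderiv ℝ (γ α) x‖ ^ 2)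
        = ∫ x, ((t α)⁻¹) ^ 2 * (fun y => ‖g α y‖ ^ 2) ((t α)⁻¹ • x) :=
          integral_congr_ae (Filter.Eventually.of_forall h1)
      _ = ((t α)⁻¹) ^ 2 * ∫ x, (fun y => ‖g α y‖ ^ 2) ((t α)⁻¹ • x) := integral_const_mul _ _
      _ = ((t α)⁻¹) ^ 2
          * ((t α) ^ (Module.finrank ℝ (EuclideanSpace ℝ (Fin N))) • ∫ y, ‖g α y‖ ^ 2) := by
          rw [MeasureTheory.Measure.integral_comp_inv_smul_of_nonneg volume
            (fun y => ‖g α y‖ ^ 2) htpos.le]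
      _ = (t α) ^ (N - 2) * Q α := by
          rw [finrank_euclideanSpace_fin, smul_eq_mul, hQdef]
          have hne : t α ≠ 0 := ne_of_gt htpos
          have hpow : (t α) ^ N = (t α) ^ 2 * (t α) ^ (N - 2) := by
            rw [← pow_add]; congr 1; omega
          rw [hpow]
          field_simp
  have hI : ∀ α : ℝ,
      ((1 : ℝ) / 2) * (∫ x, (‖fderiv ℝ (γ α) x‖ ^ 2 + lam * (γ α x) ^ 2)) -
        ∫ x, F (γ α x) = (∫ x, ‖fderiv ℝ (γ α) x‖ ^ 2) / N := by
    intro α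
    have hGint : Integrable (fun x => G (γ α x)) := by
      have hfe : (fun x => G (γ α x)) = fun x => F (γ α x) - lam / 2 * (γ α x) ^ 2 :=
        funext fun x => hG _
      rw [hfe]; exact (hγF α).sub ((hγsq α).const_mul _)
    have hsplit1 : (∫ x, (‖fderiv ℝ (γ α) x‖ ^ 2 + lam * (γ α x) ^ 2)) =
        (∫ x, ‖fderiv ℝ (γ α) x‖ ^ 2) + lam * ∫ x, (γ α x) ^ 2 := by
      rw [integral_add (hγgrad α) ((hγsq α).const_mul lam), integral_const_mul]
    have hsplit2 : (∫ x, F (γ α x)) = (∫ x, G (γ α x)) + lam / 2 * ∫ x, (γ α x) ^ 2 := by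
      have hfe : (fun x => F (γ α x)) = fun x => G (γ α x) + lam / 2 * (γ α x) ^ 2 := by
        funext x; rw [hG]; ring
      rw [hfe, integral_add hGint ((hγsq α).const_mul _), integral_const_mul]
    have hc := hcon α
    have hGval : (∫ x, G (γ α x))
        = ((N : ℝ) - 2) * (∫ x, ‖fderiv ℝ (γ α) x‖ ^ 2) / (2 * (N : ℝ)) := by
      field_simp
      linarith [hc]
    rw [hsplit1, hsplit2, hGval]
    field_simp
    ring
  set k := tbar ^ (N - 2) / N with hkdef
  have hkpos : 0 < k := by positivity
  have hlow : ∀ α : ℝ, k * (|α| * (|α| * C - 2 * D)) ≤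
      ((1 : ℝ) / 2) * (∫ x, (‖fderiv ℝ (γ α) x‖ ^ 2 + lam * (γ α x) ^ 2)) -
        ∫ x, F (γ α x) := by
    intro α
    rw [hI α, hEeq α]
    have htpos : 0 < t α := lt_of_lt_of_le htbar (ht α)
    have hQ0 : 0 ≤ Q α := integral_nonneg (fun y => by positivity)
    have hpow : tbar ^ (N - 2) ≤ (t α) ^ (N - 2) := pow_le_pow_left₀ htbar.le (ht α) _
    have h1 : tbar ^ (N - 2) * Q α ≤ (t α) ^ (N - 2) * Q α :=
      mul_le_mul_of_nonneg_right hpow hQ0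
    have h3 : tbar ^ (N - 2) * (α ^ 2 * C - 2 * |α| * D) ≤ tbar ^ (N - 2) * Q α :=
      mul_le_mul_of_nonneg_left (hQlb α) (by positivity)
    have habs : |α| * (|α| * C - 2 * D) = α ^ 2 * C - 2 * |α| * D := by
      rw [mul_sub, ← mul_assoc, abs_mul_abs_self]; ring
    calc k * (|α| * (|α| * C - 2 * D))
        = (tbar ^ (N - 2) * (α ^ 2 * C - 2 * |α| * D)) / N := by rw [habs, hkdef]; ring
      _ ≤ ((t α) ^ (N - 2) * Q α) / N := by
          exact (div_le_div_iff_of_pos_right hN0).mpr (h3.trans h1)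
  have htt : Tendsto (fun s : ℝ => k * (s * (s * C - 2 * D))) atTop atTop := by
    apply Tendsto.const_mul_atTop hkpos
    apply Tendsto.atTop_mul_atTop₀ tendsto_id
    have : Tendsto (fun s : ℝ => s * C) atTop atTop := Tendsto.atTop_mul_const hvpos tendsto_id
    simpa [sub_eq_add_neg] using tendsto_atTop_add_const_right atTop (-(2 * D)) this
  constructor
  · exact tendsto_atTop_mono hlow (htt.comp tendsto_abs_atTop_atTop)
  · exact tendsto_atTop_mono hlow (htt.comp tendsto_abs_atBot_atTop)
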